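/- Let f : ℝ → ℝ be bounded and piecewise continuously differentiable with non-differentiable points t₁ < ... < t_T and bounded derivative. Then ∫ z·f(z) dγ(z) = Σᵢ [ −exp(−z²/2)/√(2π) · f(z) ] evaluated from tᵢ⁺ to tᵢ⁻ plus ∫ f'(z) dγ(z). -/

import Mathlib

open MeasureTheory ProbabilityTheory Filter

section aux
open Set
open scoped ENNReal NNReal Real


private lemma update_hasDerivAt {G : ℝ → ℝ} {g x a : ℝ} (hx : x ≠ a) (v : ℝ)
    (h : HasDerivAt G g x) : HasDerivAt (Function.update G a v) g x := by
  have hev : Function.update G a v =ᶠ[nhds x] G := by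
    filter_upwards [isOpen_ne.mem_nhds hx] with y hy
    exact Function.update_of_ne hy _ _
  exact h.congr_of_eventuallyEq hev

private lemma my_ftc_Iio {G g : ℝ → ℝ} {b Gb : ℝ} (hint : Integrable g)
    (hd : ∀ x ∈ Iio b, HasDerivAt G (g x) x)
    (hb : Tendsto G (nhdsWithin b (Iio b)) (nhds Gb))
    (hbot : Tendsto G atBot (nhds 0)) :
    ∫ x in Iio b, g x = Gb := by
  set F := Function.update G b Gb with hF
  have hFb : F b = Gb := Function.update_self _ _ _
  have hFev : F =ᶠ[nhdsWithin b (Iio b)] G := by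
    filter_upwards [self_mem_nhdsWithin] with y hy
    exact Function.update_of_ne (ne_of_lt hy) _ _
  have hcont : ContinuousWithinAt F (Iic b) b := by
    rw [← continuousWithinAt_Iio_iff_Iic]
    rw [ContinuousWithinAt, hFb]
    exact hb.congr' hFev.symm
  have hdF : ∀ x ∈ Iio b, HasDerivAt F (g x) x := fun x hx =>
    update_hasDerivAt (ne_of_lt hx) _ (hd x hx)
  have hFbot : Tendsto F atBot (nhds 0) := by
    refine hbot.congr' ?_
    filter_upwards [Iio_mem_atBot b] with y hy
    exact (Function.update_of_ne (ne_of_lt hy) _ _).symm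
  have := integral_Iic_of_hasDerivAt_of_tendsto hcont hdF hint.integrableOn hFbot
  rw [← integral_Iic_eq_integral_Iio, this, hFb, sub_zero]

private lemma my_ftc_Ioi {G g : ℝ → ℝ} {a Ga : ℝ} (hint : Integrable g)
    (hd : ∀ x ∈ Ioi a, HasDerivAt G (g x) x)
    (ha : Tendsto G (nhdsWithin a (Ioi a)) (nhds Ga))
    (htop : Tendsto G atTop (nhds 0)) :
    ∫ x in Ioi a, g x = -Ga := by
  set F := Function.update G a Ga with hF
  have hFa : F a = Ga := Function.update_self _ _ _
  have hFev : F =ᶠ[nhdsWithin a (Ioi a)] G := by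
    filter_upwards [self_mem_nhdsWithin] with y hy
    exact Function.update_of_ne (ne_of_gt hy) _ _
  have hcont : ContinuousWithinAt F (Ici a) a := by
    rw [← continuousWithinAt_Ioi_iff_Ici]
    rw [ContinuousWithinAt, hFa]
    exact ha.congr' hFev.symm
  have hdF : ∀ x ∈ Ioi a, HasDerivAt F (g x) x := fun x hx =>
    update_hasDerivAt (ne_of_gt hx) _ (hd x hx)
  have hFtop : Tendsto F atTop (nhds 0) := by
    refine htop.congr' ?_
    filter_upwards [Ioi_mem_atTop a] with y hy
    exact (Function.update_of_ne (ne_of_gt hy) _ _).symm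
  have := integral_Ioi_of_hasDerivAt_of_tendsto hcont hdF hint.integrableOn hFtop
  rw [this, hFa, zero_sub]

private lemma my_ftc_Ioo {G g : ℝ → ℝ} {a b Ga Gb : ℝ} (hab : a < b) (hint : Integrable g)
    (hd : ∀ x ∈ Ioo a b, HasDerivAt G (g x) x)
    (ha : Tendsto G (nhdsWithin a (Ioi a)) (nhds Ga))
    (hb : Tendsto G (nhdsWithin b (Iio b)) (nhds Gb)) :
    ∫ x in Ioo a b, g x = Gb - Ga := by
  set F := Function.update (Function.update G a Ga) b Gb with hF
  have hFa : F a = Ga := by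
    rw [hF, Function.update_of_ne hab.ne, Function.update_self]
  have hFb : F b = Gb := Function.update_self _ _ _
  have hFeq : ∀ y, y ≠ a → y ≠ b → F y = G y := fun y h1 h2 => by
    rw [hF, Function.update_of_ne h2, Function.update_of_ne h1]
  have hcont : ContinuousOn F (Icc a b) := by
    intro x hx
    rcases eq_or_lt_of_le hx.1 with rfl | hax
    · -- x = a
      have hta : Tendsto F (nhdsWithin a (Ioi a)) (nhds (F a)) := by
        rw [hFa]
        refine ha.congr' ?_
        filter_upwards [self_mem_nhdsWithin,
          eventually_nhdsWithin_of_eventually_nhds (isOpen_ne.mem_nhds hab.ne)] with y hy hy'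
        exact (hFeq y (ne_of_gt hy) hy').symm
      exact (continuousWithinAt_Ioi_iff_Ici.mp hta).mono Icc_subset_Ici_self
    rcases eq_or_lt_of_le hx.2 with rfl | hxb
    · -- x = b
      have htb : Tendsto F (nhdsWithin x (Iio x)) (nhds (F x)) := by
        rw [hFb]
        refine hb.congr' ?_
        filter_upwards [self_mem_nhdsWithin,
          eventually_nhdsWithin_of_eventually_nhds (isOpen_ne.mem_nhds hab.ne')] with y hy hy'
        exact (hFeq y hy' (ne_of_lt hy)).symm
      exact (continuousWithinAt_Iio_iff_Iic.mp htb).mono Icc_subset_Iic_self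
    · have hxo : x ∈ Ioo a b := ⟨hax, hxb⟩
      have : ContinuousAt F x := by
        refine (hd x hxo).continuousAt.congr ?_
        filter_upwards [isOpen_ne.mem_nhds hxo.1.ne', isOpen_ne.mem_nhds hxo.2.ne] with y h1 h2
        exact (hFeq y h1 h2).symm
      exact this.continuousWithinAt
  have hdF : ∀ x ∈ Ioo a b, HasDerivAt F (g x) x := fun x hx =>
    update_hasDerivAt hx.2.ne _ (update_hasDerivAt hx.1.ne' _ (hd x hx))
  have := intervalIntegral.integral_eq_sub_of_hasDerivAt_of_le hab.le hcont hdF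
    hint.intervalIntegrable
  rw [intervalIntegral.integral_of_le hab.le, ← integral_Ioc_eq_integral_Ioo] at *
  rw [this, hFa, hFb]

private lemma my_sum_jumps_Iio {G g : ℝ → ℝ} (hint : Integrable g)
    (hbot : Tendsto G atBot (nhds 0)) (Gl Gr : ℝ → ℝ) (s : Finset ℝ) :
    (∀ t ∈ s, Tendsto G (nhdsWithin t (Iio t)) (nhds (Gl t))) →
    (∀ t ∈ s, Tendsto G (nhdsWithin t (Ioi t)) (nhds (Gr t))) →
    ∀ (b Gb : ℝ), (∀ t ∈ s, t < b) →
    (∀ x ∈ Iio b, x ∉ s → HasDerivAt G (g x) x) →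
    Tendsto G (nhdsWithin b (Iio b)) (nhds Gb) →
    ∫ x in Iio b, g x = Gb + ∑ t ∈ s, (Gl t - Gr t) := by
  induction s using Finset.induction_on_max with
  | empty =>
    intro _ _ b Gb _ hd hb
    rw [Finset.sum_empty, add_zero]
    exact my_ftc_Iio hint (fun x hx => hd x hx (Finset.notMem_empty x)) hb hbot
  | insert a s' hmax IH =>
    intro hl hr b Gb hsb hd hb
    have hab : a < b := hsb a (Finset.mem_insert_self a s')
    have has' : a ∉ s' := fun h => lt_irrefl a (hmax a h)
    have h1 : ∫ x in Iio a, g x = Gl a + ∑ t ∈ s', (Gl t - Gr t) := by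
      refine IH (fun t ht => hl t (Finset.mem_insert_of_mem ht))
        (fun t ht => hr t (Finset.mem_insert_of_mem ht)) a (Gl a) hmax ?_
        (hl a (Finset.mem_insert_self a s'))
      intro x hx hxs
      refine hd x (hx.trans hab) ?_
      simp only [Finset.mem_insert, not_or]
      exact ⟨ne_of_lt hx, hxs⟩
    have h2 : ∫ x in Ioo a b, g x = Gb - Gr a := by
      refine my_ftc_Ioo hab hint ?_ (hr a (Finset.mem_insert_self a s')) hb
      intro x hx
      refine hd x hx.2 ?_
      simp only [Finset.mem_insert, not_or]
      exact ⟨hx.1.ne', fun h => absurd (hmax x h) (not_lt.mpr hx.1.le)⟩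
    have hsplit : ∫ x in Iio b, g x = (∫ x in Iic a, g x) + ∫ x in Ioo a b, g x := by
      rw [← Iic_union_Ioo_eq_Iio hab]
      exact setIntegral_union (by
          simp only [Set.disjoint_left]
          intro x hx hx'
          exact absurd hx'.1 (not_lt.mpr hx)) measurableSet_Ioo
        hint.integrableOn hint.integrableOn
    rw [hsplit, integral_Iic_eq_integral_Iio, h1, h2, Finset.sum_insert has']
    ring

private lemma my_integral_eq_sum {G g : ℝ → ℝ} (hint : Integrable g) (s : Finset ℝ)
    (Gl Gr : ℝ → ℝ)
    (hl : ∀ t ∈ s, Tendsto G (nhdsWithin t (Iio t)) (nhds (Gl t)))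
    (hr : ∀ t ∈ s, Tendsto G (nhdsWithin t (Ioi t)) (nhds (Gr t)))
    (hd : ∀ x, x ∉ s → HasDerivAt G (g x) x)
    (hbot : Tendsto G atBot (nhds 0)) (htop : Tendsto G atTop (nhds 0)) :
    ∫ x, g x = ∑ t ∈ s, (Gl t - Gr t) := by
  set b : ℝ := if h : s.Nonempty then s.max' h + 1 else 0 with hbdef
  have hb_gt : ∀ t ∈ s, t < b := by
    intro t ht
    rw [hbdef, dif_pos ⟨t, ht⟩]
    exact lt_of_le_of_lt (s.le_max' t ht) (lt_add_one _)
  have hb_notin : b ∉ s := fun h => lt_irrefl b (hb_gt b h)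
  have hdb := hd b hb_notin
  have hcb := hdb.continuousAt
  have h1 : ∫ x in Iio b, g x = G b + ∑ t ∈ s, (Gl t - Gr t) :=
    my_sum_jumps_Iio hint hbot Gl Gr s hl hr b (G b) hb_gt
      (fun x hx hxs => hd x hxs)
      (hcb.continuousWithinAt.tendsto)
  have h2 : ∫ x in Ioi b, g x = -(G b) := by
    refine my_ftc_Ioi hint (fun x hx => hd x (fun hmem => ?_)) hcb.continuousWithinAt.tendsto htop
    exact absurd (hb_gt x hmem) (not_lt.mpr hx.le)
  rw [← intervalIntegral.integral_Iio_add_Ici hint.integrableOn hint.integrableOn,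
    integral_Ici_eq_integral_Ioi, h1, h2]
  ring


private noncomputable def gph (z : ℝ) : ℝ := Real.exp (-z ^ 2 / 2) / Real.sqrt (2 * Real.pi)

private lemma gph_nonneg (z : ℝ) : 0 ≤ gph z := by
  unfold gph; positivity

private lemma continuous_gph : Continuous gph := by
  unfold gph
  exact (Real.continuous_exp.comp (by continuity)).div_const _

private lemma hasDerivAt_gph (z : ℝ) : HasDerivAt gph (-z * gph z) z := by
  have h1 : HasDerivAt (fun z : ℝ => -z ^ 2 / 2) (-z) z := by
    have : HasDerivAt (fun z : ℝ => -z ^ 2 / 2) (-(↑2 * z ^ (2 - 1)) / 2) z :=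
      ((hasDerivAt_pow 2 z).neg.div_const 2)
    convert this using 1
    ring
  have h2 : HasDerivAt gph (Real.exp (-z ^ 2 / 2) * -z / Real.sqrt (2 * Real.pi)) z :=
    (h1.exp).div_const (Real.sqrt (2 * Real.pi))
  convert h2 using 1
  unfold gph
  ring

private lemma tendsto_gph_atTop : Tendsto gph atTop (nhds 0) := by
  have hsq : Tendsto (fun z : ℝ => z ^ 2) atTop atTop := tendsto_pow_atTop two_ne_zero
  have h1 : Tendsto (fun z : ℝ => -z ^ 2 / 2) atTop atBot :=
    (tendsto_neg_atTop_atBot.comp hsq).atBot_div_const two_pos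
  have h2 := ((Real.tendsto_exp_atBot).comp h1).div_const (Real.sqrt (2 * Real.pi))
  rw [zero_div] at h2
  exact h2

private lemma tendsto_gph_atBot : Tendsto gph atBot (nhds 0) := by
  have hsq' : Tendsto (fun z : ℝ => (-z) ^ 2) atBot atTop :=
    (tendsto_pow_atTop two_ne_zero).comp tendsto_neg_atBot_atTop
  have hsq : Tendsto (fun z : ℝ => z ^ 2) atBot atTop := by
    simpa only [neg_sq] using hsq'
  have h1 : Tendsto (fun z : ℝ => -z ^ 2 / 2) atBot atBot :=
    (tendsto_neg_atTop_atBot.comp hsq).atBot_div_const two_pos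
  have h2 := ((Real.tendsto_exp_atBot).comp h1).div_const (Real.sqrt (2 * Real.pi))
  rw [zero_div] at h2
  exact h2

private lemma integrable_gph : Integrable gph := by
  have h := integrable_exp_neg_mul_sq (b := (1:ℝ)/2) one_half_pos
  have heq : gph = fun x => Real.exp (-(1/2 : ℝ) * x ^ 2) / Real.sqrt (2 * Real.pi) := by
    funext x
    unfold gph
    congr 1
    ring
  rw [heq]
  exact h.div_const _

private lemma integrable_abs_mul_gph : Integrable (fun z => |z| * gph z) := by
  have h := (integrable_mul_exp_neg_mul_sq (b := (1:ℝ)/2) one_half_pos).abs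
  have heq : (fun z => |z| * gph z)
      = fun x => |x * Real.exp (-(1/2 : ℝ) * x ^ 2)| / Real.sqrt (2 * Real.pi) := by
    funext x
    unfold gph
    rw [abs_mul, Real.abs_exp, show -(1/2 : ℝ) * x ^ 2 = -x ^ 2 / 2 by ring, mul_div_assoc]
  rw [heq]
  exact h.div_const _

private lemma gaussianPDFReal_eq_gph (x : ℝ) : gaussianPDFReal 0 1 x = gph x := by
  unfold gph
  simp only [gaussianPDFReal, NNReal.coe_one, mul_one, sub_zero]
  rw [mul_comm, ← div_eq_mul_inv]

private lemma integral_gaussianReal_eq (h : ℝ → ℝ) :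
    ∫ z, h z ∂(gaussianReal 0 1) = ∫ z, gph z * h z := by
  rw [gaussianReal_of_var_ne_zero 0 one_ne_zero]
  have hmeas : Measurable fun x => (gaussianPDFReal 0 1 x).toNNReal :=
    (measurable_gaussianPDFReal 0 1).real_toNNReal
  have hd : (volume : Measure ℝ).withDensity (gaussianPDF 0 1)
      = (volume : Measure ℝ).withDensity
          (fun x => (((gaussianPDFReal 0 1 x).toNNReal : ℝ≥0) : ℝ≥0∞)) := rfl
  rw [hd, integral_withDensity_eq_integral_smul hmeas]
  congr 1
  funext x
  rw [NNReal.smul_def, smul_eq_mul, Real.coe_toNNReal _ (gaussianPDFReal_nonneg 0 1 x),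
    gaussianPDFReal_eq_gph]

end aux

theorem gaussian_integration_by_parts_piecewise
    (f f' : ℝ → ℝ) (s : Finset ℝ) (fl fr : ℝ → ℝ) (C C' : ℝ)
    (hbdd : ∀ z, |f z| ≤ C)
    (hderiv : ∀ z ∉ s, HasDerivAt f (f' z) z)
    (hmeas : Measurable f')
    (hderiv_bdd : ∀ z, |f' z| ≤ C')
    (hleft : ∀ t ∈ s, Tendsto f (nhdsWithin t (Set.Iio t)) (nhds (fl t)))
    (hright : ∀ t ∈ s, Tendsto f (nhdsWithin t (Set.Ioi t)) (nhds (fr t))) :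
    ∫ z, z * f z ∂(gaussianReal 0 1) =
      (∑ t ∈ s, ((-(Real.exp (-t ^ 2 / 2) / Real.sqrt (2 * Real.pi))) * fl t -
          (-(Real.exp (-t ^ 2 / 2) / Real.sqrt (2 * Real.pi))) * fr t)) +
      ∫ z, f' z ∂(gaussianReal 0 1) := by
  set G : ℝ → ℝ := fun z => -(gph z * f z) with hGdef
  set g : ℝ → ℝ := fun z => gph z * (z * f z) - gph z * f' z with hgdef
  -- measurability of f
  have hfae : AEMeasurable f (volume : Measure ℝ) := by
    have hcs : ContinuousOn f ((↑s : Set ℝ))ᶜ := fun x hx =>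
      ((hderiv x (by simpa using hx)).continuousAt).continuousWithinAt
    have h1 : AEMeasurable f ((volume : Measure ℝ).restrict ((↑s : Set ℝ))ᶜ) :=
      hcs.aemeasurable (s.finite_toSet.measurableSet).compl
    rwa [Measure.restrict_eq_self_of_ae_mem] at h1
    have hz : (volume : Measure ℝ) (↑s : Set ℝ) = 0 := s.finite_toSet.measure_zero _
    exact (MeasureTheory.ae_iff).mpr (by simpa using hz)
  -- integrability
  have hint1 : Integrable (fun z => gph z * (z * f z)) := by
    refine Integrable.mono' ((integrable_abs_mul_gph.mul_const C)) ?_ ?_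
    · exact (continuous_gph.aemeasurable.mul
        (aemeasurable_id.mul hfae)).aestronglyMeasurable
    · refine Filter.Eventually.of_forall fun z => ?_
      have h1 := hbdd z
      have h2 := gph_nonneg z
      have h3 := abs_nonneg z
      rw [Real.norm_eq_abs, abs_mul, abs_mul, abs_of_nonneg h2]
      nlinarith [mul_le_mul_of_nonneg_left h1 (mul_nonneg h3 h2)]
  have hint2 : Integrable (fun z => gph z * f' z) := by
    refine Integrable.mono' ((integrable_gph.mul_const C')) ?_ ?_
    · exact (continuous_gph.aemeasurable.mul hmeas.aemeasurable).aestronglyMeasurable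
    · refine Filter.Eventually.of_forall fun z => ?_
      have h1 := hderiv_bdd z
      have h2 := gph_nonneg z
      rw [Real.norm_eq_abs, abs_mul, abs_of_nonneg h2]
      nlinarith [mul_le_mul_of_nonneg_left h1 h2]
  have hintg : Integrable g := hint1.sub hint2
  -- derivative of G off s
  have hGd : ∀ x, x ∉ s → HasDerivAt G (g x) x := by
    intro x hx
    have h : HasDerivAt G (-(-x * gph x * f x + gph x * f' x)) x :=
      ((hasDerivAt_gph x).mul (hderiv x hx)).neg
    convert h using 1
    simp only [hgdef]
    ring
  -- one-sided limits of G
  have hGl : ∀ t ∈ s, Tendsto G (nhdsWithin t (Set.Iio t)) (nhds (-(gph t * fl t))) := by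
    intro t ht
    exact (((continuous_gph.tendsto t).mono_left nhdsWithin_le_nhds).mul (hleft t ht)).neg
  have hGr : ∀ t ∈ s, Tendsto G (nhdsWithin t (Set.Ioi t)) (nhds (-(gph t * fr t))) := by
    intro t ht
    exact (((continuous_gph.tendsto t).mono_left nhdsWithin_le_nhds).mul (hright t ht)).neg
  -- limits of G at infinity
  have hC : 0 ≤ C := le_trans (abs_nonneg _) (hbdd 0)
  have hsq : ∀ z, -(C * gph z) ≤ G z ∧ G z ≤ C * gph z := by
    intro z
    have h1 := hbdd z
    have h2 := gph_nonneg z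
    have := abs_le.mp h1
    constructor <;> simp only [hGdef] <;> nlinarith
  have hbot : Tendsto G atBot (nhds 0) := by
    have hu := tendsto_gph_atBot.const_mul C
    rw [mul_zero] at hu
    have hl' := hu.neg
    rw [neg_zero] at hl'
    exact tendsto_of_tendsto_of_tendsto_of_le_of_le hl' hu
      (fun z => (hsq z).1) (fun z => (hsq z).2)
  have htop : Tendsto G atTop (nhds 0) := by
    have hu := tendsto_gph_atTop.const_mul C
    rw [mul_zero] at hu
    have hl' := hu.neg
    rw [neg_zero] at hl'
    exact tendsto_of_tendsto_of_tendsto_of_le_of_le hl' hu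
      (fun z => (hsq z).1) (fun z => (hsq z).2)
  -- main identity
  have hmain : ∫ x, g x = ∑ t ∈ s, ((-(gph t * fl t)) - (-(gph t * fr t))) :=
    my_integral_eq_sum hintg s (fun t => -(gph t * fl t)) (fun t => -(gph t * fr t))
      hGl hGr hGd hbot htop
  have hsum : ∑ t ∈ s, ((-(gph t * fl t)) - (-(gph t * fr t))) =
      ∑ t ∈ s, ((-(Real.exp (-t ^ 2 / 2) / Real.sqrt (2 * Real.pi))) * fl t -
          (-(Real.exp (-t ^ 2 / 2) / Real.sqrt (2 * Real.pi))) * fr t) := by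
    refine Finset.sum_congr rfl fun t _ => ?_
    unfold gph
    ring
  have hsplit : ∫ x, g x = (∫ z, z * f z ∂(gaussianReal 0 1)) - ∫ z, f' z ∂(gaussianReal 0 1) := by
    rw [integral_gaussianReal_eq (fun z => z * f z), integral_gaussianReal_eq f', hgdef]
    exact integral_sub hint1 hint2
  rw [hsplit, hsum] at hmain
  linarith
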